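/- Weighted L^∞ estimate for the nonlinear Boltzmann collision term: for every θ > 0 and every 0 ≤ ρ ≤ 1/4 there exists a constant C = C(θ, ρ) > 0 such that for all f : ℝ² → ℝ with ‖f‖_{θ,ρ} < ∞, one has ‖ν^{−1}·Γ[f, f]‖_{θ,ρ} ≤ C·‖f‖_{θ,ρ}², where ‖h‖_{θ,ρ} = sup_{v ∈ ℝ²} (1 + |v|²)^{θ/2} e^{ρ|v|²} |h(v)|. -/

import Mathlib

open MeasureTheory Real

noncomputable section

/-- The two-dimensional standard Maxwellian `μ(v) = (2π)^{−1/2} exp(−|v|²/2)`. -/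
def Maxwellian (v : EuclideanSpace ℝ (Fin 2)) : ℝ :=
  (Real.sqrt (2 * Real.pi))⁻¹ * Real.exp (-‖v‖ ^ 2 / 2)

/-- The unit vector of `S¹ ⊂ ℝ²` with angle `φ`. -/
def circleVec (φ : ℝ) : EuclideanSpace ℝ (Fin 2) :=
  (EuclideanSpace.equiv (Fin 2) ℝ).symm ![Real.cos φ, Real.sin φ]

/-- Post-collisional velocity `u* = u + ω(ω·(w − u))`. -/
def uStar (ω u w : EuclideanSpace ℝ (Fin 2)) : EuclideanSpace ℝ (Fin 2) :=
  u + (inner ℝ ω (w - u) : ℝ) • ω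

/-- Post-collisional velocity `w* = w − ω(ω·(w − u))`. -/
def wStar (ω u w : EuclideanSpace ℝ (Fin 2)) : EuclideanSpace ℝ (Fin 2) :=
  w - (inner ℝ ω (w - u) : ℝ) • ω

/-- Hard-sphere collision frequency
`ν(w) = ∫_{ℝ²} ∫_{S¹} |ω·(w−u)| μ(u) dω du`, with the circle parametrized by
angle. -/
def collisionFreq (w : EuclideanSpace ℝ (Fin 2)) : ℝ :=
  ∫ u : EuclideanSpace ℝ (Fin 2),
    (∫ φ in (0:ℝ)..(2 * Real.pi), |(inner ℝ (circleVec φ) (w - u) : ℝ)|) * Maxwellian u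

/-- `K₁[f](w) = μ^{1/2}(w) ∫_{ℝ²} ∫_{S¹} |ω·(w−u)| μ^{1/2}(u) f(u) dω du`. -/
def Kone (f : EuclideanSpace ℝ (Fin 2) → ℝ) (w : EuclideanSpace ℝ (Fin 2)) : ℝ :=
  Real.sqrt (Maxwellian w) *
    ∫ u : EuclideanSpace ℝ (Fin 2),
      ∫ φ in (0:ℝ)..(2 * Real.pi),
        |(inner ℝ (circleVec φ) (w - u) : ℝ)| * Real.sqrt (Maxwellian u) * f u

/-- `K₂[f](w) = ∫_{ℝ²} ∫_{S¹} |ω·(w−u)| μ^{1/2}(u)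
  (μ^{1/2}(w*) f(u*) + μ^{1/2}(u*) f(w*)) dω du`. -/
def Ktwo (f : EuclideanSpace ℝ (Fin 2) → ℝ) (w : EuclideanSpace ℝ (Fin 2)) : ℝ :=
  ∫ u : EuclideanSpace ℝ (Fin 2),
    ∫ φ in (0:ℝ)..(2 * Real.pi),
      |(inner ℝ (circleVec φ) (w - u) : ℝ)| * Real.sqrt (Maxwellian u) *
        (Real.sqrt (Maxwellian (wStar (circleVec φ) u w)) * f (uStar (circleVec φ) u w)
          + Real.sqrt (Maxwellian (uStar (circleVec φ) u w)) * f (wStar (circleVec φ) u w))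

/-- `K = K₂ − K₁`, the compact part of the linearized Boltzmann operator. -/
def Kop (f : EuclideanSpace ℝ (Fin 2) → ℝ) (w : EuclideanSpace ℝ (Fin 2)) : ℝ :=
  Ktwo f w - Kone f w

/-- The linearized Boltzmann operator `L[f] = ν f − K[f]`. -/
def Lop (f : EuclideanSpace ℝ (Fin 2) → ℝ) (w : EuclideanSpace ℝ (Fin 2)) : ℝ :=
  collisionFreq w * f w - Kop f w

end

noncomputable section

/-- Nonlinear Boltzmann collision term
`Γ[f, g](w) = μ^{−1/2}(w) ∫_{ℝ²} ∫_{S¹} |ω·(w−u)|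
  (μ^{1/2}(u*) f(u*) μ^{1/2}(w*) g(w*) − μ^{1/2}(u) f(u) μ^{1/2}(w) g(w)) dω du`. -/
def Gammaop (f g : EuclideanSpace ℝ (Fin 2) → ℝ) (w : EuclideanSpace ℝ (Fin 2)) : ℝ :=
  (Real.sqrt (Maxwellian w))⁻¹ *
    ∫ u : EuclideanSpace ℝ (Fin 2),
      ∫ φ in (0:ℝ)..(2 * Real.pi),
        |(inner ℝ (circleVec φ) (w - u) : ℝ)| *
          (Real.sqrt (Maxwellian (uStar (circleVec φ) u w)) * f (uStar (circleVec φ) u w) *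
              Real.sqrt (Maxwellian (wStar (circleVec φ) u w)) * g (wStar (circleVec φ) u w)
            - Real.sqrt (Maxwellian u) * f u * Real.sqrt (Maxwellian w) * g w)

/-- The weighted `L^∞` norm
`‖h‖_{θ,ρ} = sup_v (1 + |v|²)^{θ/2} e^{ρ|v|²} |h(v)|`, valued in `ℝ≥0∞`. -/
def weightedSupNorm (θ ρ : ℝ) (h : EuclideanSpace ℝ (Fin 2) → ℝ) : ENNReal :=
  ⨆ v : EuclideanSpace ℝ (Fin 2),
    ENNReal.ofReal ((1 + ‖v‖ ^ 2) ^ (θ / 2) * Real.exp (ρ * ‖v‖ ^ 2) * |h v|)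

end


noncomputable section BoltzmannAux

local notation "E2" => EuclideanSpace ℝ (Fin 2)

lemma inner_circleVec (φ : ℝ) (z : E2) :
    (inner ℝ (circleVec φ) z : ℝ) = Real.cos φ * z 0 + Real.sin φ * z 1 := by
  simp [circleVec, PiLp.inner_apply, Fin.sum_univ_two, RCLike.inner_apply]; ring

lemma norm_circleVec (φ : ℝ) : ‖circleVec φ‖ = 1 := by
  rw [EuclideanSpace.norm_eq]; simp [circleVec, Fin.sum_univ_two]

lemma abs_inner_circleVec_le (φ : ℝ) (z : E2) : |(inner ℝ (circleVec φ) z : ℝ)| ≤ ‖z‖ := by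
  calc |(inner ℝ (circleVec φ) z : ℝ)| ≤ ‖circleVec φ‖ * ‖z‖ := abs_real_inner_le_norm _ _
  _ = ‖z‖ := by rw [norm_circleVec, one_mul]

def angInt (z : E2) : ℝ := ∫ φ in (0:ℝ)..(2 * Real.pi), |(inner ℝ (circleVec φ) z : ℝ)|

lemma cont_inner_circleVec (z : E2) : Continuous fun φ => |(inner ℝ (circleVec φ) z : ℝ)| := by
  simp only [inner_circleVec]
  fun_prop

lemma angInt_nonneg (z : E2) : 0 ≤ angInt z :=
  intervalIntegral.integral_nonneg (by positivity) (fun φ _ => abs_nonneg _)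

lemma angInt_le (z : E2) : angInt z ≤ 2 * Real.pi * ‖z‖ := by
  have h := intervalIntegral.integral_mono_on (a := (0:ℝ)) (b := 2 * Real.pi)
    (by positivity) ((cont_inner_circleVec z).intervalIntegrable _ _)
    (intervalIntegrable_const (μ := volume) (c := ‖z‖))
    (fun φ _ => abs_inner_circleVec_le φ z)
  rw [intervalIntegral.integral_const, smul_eq_mul] at h
  unfold angInt; linarith

lemma angInt_ge (z : E2) : Real.pi * ‖z‖ ≤ angInt z := by
  have hz2 : ‖z‖ ^ 2 = z 0 ^ 2 + z 1 ^ 2 := by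
    rw [EuclideanSpace.norm_eq, Real.sq_sqrt (by positivity)]
    simp [Fin.sum_univ_two, sq_abs]
  have hcont : Continuous fun φ => (inner ℝ (circleVec φ) z : ℝ) ^ 2 := by
    simp only [inner_circleVec]; fun_prop
  have key : (∫ φ in (0:ℝ)..(2 * Real.pi), (inner ℝ (circleVec φ) z : ℝ) ^ 2)
      = Real.pi * ‖z‖ ^ 2 := by
    have : ∀ φ : ℝ, (inner ℝ (circleVec φ) z : ℝ) ^ 2
        = z 0 ^ 2 * Real.cos φ ^ 2 + (z 1 ^ 2 * Real.sin φ ^ 2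
            + (2 * z 0 * z 1) * (Real.sin φ * Real.cos φ)) := by
      intro φ; rw [inner_circleVec]; ring
    rw [intervalIntegral.integral_congr (g := fun φ => z 0 ^ 2 * Real.cos φ ^ 2
      + (z 1 ^ 2 * Real.sin φ ^ 2 + (2 * z 0 * z 1) * (Real.sin φ * Real.cos φ)))
      (fun φ _ => this φ)]
    rw [intervalIntegral.integral_add (by apply Continuous.intervalIntegrable; fun_prop)
        (by apply Continuous.intervalIntegrable; fun_prop),
      intervalIntegral.integral_add (by apply Continuous.intervalIntegrable; fun_prop)
        (by apply Continuous.intervalIntegrable; fun_prop),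
      intervalIntegral.integral_const_mul, intervalIntegral.integral_const_mul,
      intervalIntegral.integral_const_mul, integral_cos_sq, integral_sin_sq,
      integral_sin_mul_cos₁]
    simp [Real.sin_two_pi, Real.cos_two_pi, hz2]
    ring
  have hmono : (∫ φ in (0:ℝ)..(2 * Real.pi), (inner ℝ (circleVec φ) z : ℝ) ^ 2)
      ≤ ∫ φ in (0:ℝ)..(2 * Real.pi), ‖z‖ * |(inner ℝ (circleVec φ) z : ℝ)| := by
    apply intervalIntegral.integral_mono_on (by positivity)
      (hcont.intervalIntegrable _ _)
      ((continuous_const.mul (cont_inner_circleVec z)).intervalIntegrable _ _)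
    intro φ _
    have h1 : (inner ℝ (circleVec φ) z : ℝ) ^ 2 = |(inner ℝ (circleVec φ) z : ℝ)| * |(inner ℝ (circleVec φ) z : ℝ)| := by
      rw [← abs_mul, ← sq, abs_sq]
    rw [h1]
    exact mul_le_mul_of_nonneg_right (abs_inner_circleVec_le φ z) (abs_nonneg _)
  rw [key, intervalIntegral.integral_const_mul] at hmono
  rcases eq_or_lt_of_le (norm_nonneg z) with h | h
  · simp [← h, angInt_nonneg]
  · unfold angInt; nlinarith [hmono]

lemma angInt_lip (z z' : E2) : |angInt z - angInt z'| ≤ 2 * Real.pi * ‖z - z'‖ := by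
  have hsub : angInt z - angInt z'
      = ∫ φ in (0:ℝ)..(2 * Real.pi),
          (|(inner ℝ (circleVec φ) z : ℝ)| - |(inner ℝ (circleVec φ) z' : ℝ)|) := by
    rw [intervalIntegral.integral_sub ((cont_inner_circleVec z).intervalIntegrable _ _)
      ((cont_inner_circleVec z').intervalIntegrable _ _)]
    rfl
  rw [hsub]
  have := intervalIntegral.norm_integral_le_of_norm_le_const (C := ‖z - z'‖)
    (f := fun φ => |(inner ℝ (circleVec φ) z : ℝ)| - |(inner ℝ (circleVec φ) z' : ℝ)|)
    (a := 0) (b := 2 * Real.pi) ?_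
  · rw [Real.norm_eq_abs] at this
    calc |_| ≤ ‖z - z'‖ * |2 * Real.pi - 0| := this
    _ = 2 * Real.pi * ‖z - z'‖ := by
        rw [sub_zero, abs_of_nonneg (by positivity)]; ring
  · intro φ _
    rw [Real.norm_eq_abs]
    calc |(|(inner ℝ (circleVec φ) z : ℝ)| - |(inner ℝ (circleVec φ) z' : ℝ)|)|
        ≤ |(inner ℝ (circleVec φ) z : ℝ) - (inner ℝ (circleVec φ) z' : ℝ)| := abs_abs_sub_abs_le_abs_sub _ _
    _ = |(inner ℝ (circleVec φ) (z - z') : ℝ)| := by rw [inner_sub_right]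
    _ ≤ ‖z - z'‖ := abs_inner_circleVec_le _ _

lemma cont_angInt : Continuous angInt := by
  have : LipschitzWith (2 * Real.pi).toNNReal angInt := by
    apply LipschitzWith.of_dist_le_mul
    intro z z'
    rw [Real.dist_eq, dist_eq_norm]
    calc |angInt z - angInt z'| ≤ 2 * Real.pi * ‖z - z'‖ := angInt_lip z z'
    _ = ((2 * Real.pi).toNNReal : ℝ) * ‖z - z'‖ := by
        rw [Real.coe_toNNReal _ (by positivity)]
  exact this.continuous

lemma integrable_gauss {b : ℝ} (hb : 0 < b) :
    Integrable (fun v : E2 => Real.exp (-b * ‖v‖ ^ 2)) := by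
  have h := (GaussianFourier.integrable_cexp_neg_mul_sq_norm_add (V := E2)
    (b := (b : ℂ)) (by simpa using hb) 0 (0 : E2)).norm
  apply h.congr
  filter_upwards with v
  have h2 : (-(b:ℂ) * (‖v‖:ℂ) ^ 2 + 0 * ((inner ℝ (0:E2) v : ℝ) : ℂ)) = ((-b * ‖v‖^2 : ℝ) : ℂ) := by
    push_cast; ring
  rw [h2, Complex.norm_exp]
  simp
  exact Or.inl (by norm_cast)

lemma norm_le_gauss {b : ℝ} (hb : 0 < b) (v : E2) :
    ‖v‖ ≤ Real.sqrt (2 / b) * Real.exp (b * ‖v‖ ^ 2 / 4) := by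
  have h1 : ‖v‖ ^ 2 ≤ 2 / b * Real.exp (b * ‖v‖ ^ 2 / 2) := by
    have := Real.add_one_le_exp (b * ‖v‖ ^ 2 / 2)
    have h2 : b * ‖v‖ ^ 2 / 2 ≤ Real.exp (b * ‖v‖ ^ 2 / 2) := by
      nlinarith [mul_nonneg hb.le (sq_nonneg ‖v‖)]
    calc ‖v‖ ^ 2 = 2 / b * (b * ‖v‖ ^ 2 / 2) := by field_simp
    _ ≤ 2 / b * Real.exp (b * ‖v‖ ^ 2 / 2) := by
        apply mul_le_mul_of_nonneg_left h2 (by positivity)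
  calc ‖v‖ = Real.sqrt (‖v‖ ^ 2) := by rw [Real.sqrt_sq (norm_nonneg v)]
  _ ≤ Real.sqrt (2 / b * Real.exp (b * ‖v‖ ^ 2 / 2)) := Real.sqrt_le_sqrt h1
  _ = Real.sqrt (2 / b) * Real.exp (b * ‖v‖ ^ 2 / 4) := by
      rw [Real.sqrt_mul (by positivity), ← Real.exp_half]
      ring_nf

lemma integrable_norm_mul_gauss {b : ℝ} (hb : 0 < b) :
    Integrable (fun v : E2 => ‖v‖ * Real.exp (-b * ‖v‖ ^ 2)) := by
  apply Integrable.mono' (g := fun v : E2 =>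
    Real.sqrt (2 / b) * Real.exp (-(b/2) * ‖v‖ ^ 2))
    (((integrable_gauss (by positivity : (0:ℝ) < b/2))).const_mul _)
    ((continuous_norm.mul (by fun_prop)).aestronglyMeasurable)
  filter_upwards with v
  show ‖‖v‖ * Real.exp (-b * ‖v‖ ^ 2)‖ ≤ _
  rw [Real.norm_eq_abs, abs_of_nonneg (by positivity)]
  calc ‖v‖ * Real.exp (-b * ‖v‖ ^ 2)
      ≤ (Real.sqrt (2 / b) * Real.exp (b * ‖v‖ ^ 2 / 4)) * Real.exp (-b * ‖v‖ ^ 2) :=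
        mul_le_mul_of_nonneg_right (norm_le_gauss hb v) (by positivity)
  _ = Real.sqrt (2 / b) * Real.exp (b * ‖v‖ ^ 2 / 4 + -b * ‖v‖ ^ 2) := by
      rw [Real.exp_add]; ring
  _ ≤ Real.sqrt (2 / b) * Real.exp (-(b/2) * ‖v‖ ^ 2) := by
      apply mul_le_mul_of_nonneg_left _ (by positivity)
      apply Real.exp_le_exp.mpr
      nlinarith [mul_nonneg hb.le (sq_nonneg ‖v‖)]

lemma maxwellian_pos (v : E2) : 0 < Maxwellian v := by
  unfold Maxwellian; positivity

lemma continuous_maxwellian : Continuous Maxwellian := by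
  unfold Maxwellian; fun_prop

lemma max_eq_gauss (v : E2) :
    Maxwellian v = (Real.sqrt (2 * Real.pi))⁻¹ * Real.exp (-(1/2 : ℝ) * ‖v‖ ^ 2) := by
  unfold Maxwellian; rw [show -‖v‖ ^ 2 / 2 = -(1/2 : ℝ) * ‖v‖ ^ 2 by ring]

lemma sqrt_max_eq (v : E2) :
    Real.sqrt (Maxwellian v)
      = Real.sqrt ((Real.sqrt (2 * Real.pi))⁻¹) * Real.exp (-(1/4 : ℝ) * ‖v‖ ^ 2) := by
  unfold Maxwellian
  rw [Real.sqrt_mul (by positivity), ← Real.exp_half]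
  congr 1; ring

lemma integrable_maxwellian : Integrable Maxwellian := by
  apply ((integrable_gauss (by norm_num : (0:ℝ) < 1/2)).const_mul
    (Real.sqrt (2 * Real.pi))⁻¹).congr
  filter_upwards with v
  rw [max_eq_gauss]

lemma integrable_sqrt_maxwellian : Integrable (fun v : E2 => Real.sqrt (Maxwellian v)) := by
  apply ((integrable_gauss (by norm_num : (0:ℝ) < 1/4)).const_mul
    (Real.sqrt (Real.sqrt (2 * Real.pi))⁻¹)).congr
  filter_upwards with v
  rw [sqrt_max_eq]

lemma integrable_norm_mul_maxwellian : Integrable (fun v : E2 => ‖v‖ * Maxwellian v) := by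
  have h := ((integrable_norm_mul_gauss (by norm_num : (0:ℝ) < 1/2)).const_mul
    (Real.sqrt (2 * Real.pi))⁻¹)
  apply h.congr
  filter_upwards with v
  rw [max_eq_gauss]; ring

lemma integrable_norm_mul_sqrt_maxwellian :
    Integrable (fun v : E2 => ‖v‖ * Real.sqrt (Maxwellian v)) := by
  have h := ((integrable_norm_mul_gauss (by norm_num : (0:ℝ) < 1/4)).const_mul
    (Real.sqrt (Real.sqrt (2 * Real.pi))⁻¹))
  apply h.congr
  filter_upwards with v
  rw [sqrt_max_eq]; ring

lemma integrable_shift_mul_gauss {b : ℝ} (hb : 0 < b) (w : E2) :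
    Integrable (fun u : E2 => ‖w - u‖ * Real.exp (-b * ‖u‖ ^ 2)) := by
  apply Integrable.mono' (g := fun u : E2 =>
      ‖w‖ * Real.exp (-b * ‖u‖ ^ 2) + ‖u‖ * Real.exp (-b * ‖u‖ ^ 2))
    (((integrable_gauss hb).const_mul _).add (integrable_norm_mul_gauss hb))
    (((continuous_const.sub continuous_id).norm.mul (by fun_prop)).aestronglyMeasurable)
  filter_upwards with u
  show ‖‖w - u‖ * Real.exp (-b * ‖u‖ ^ 2)‖ ≤ _
  rw [Real.norm_eq_abs, abs_of_nonneg (by positivity)]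
  have h1 : ‖w - u‖ ≤ ‖w‖ + ‖u‖ := norm_sub_le _ _
  nlinarith [Real.exp_pos (-b * ‖u‖ ^ 2)]

lemma integrable_shift_mul_maxwellian (w : E2) :
    Integrable (fun u : E2 => ‖w - u‖ * Maxwellian u) := by
  have h := (integrable_shift_mul_gauss (by norm_num : (0:ℝ) < 1/2) w).const_mul
    (Real.sqrt (2 * Real.pi))⁻¹
  apply h.congr
  filter_upwards with v
  rw [max_eq_gauss]; ring

lemma integrable_shift_mul_sqrt_maxwellian (w : E2) :
    Integrable (fun u : E2 => ‖w - u‖ * Real.sqrt (Maxwellian u)) := by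
  have h := (integrable_shift_mul_gauss (by norm_num : (0:ℝ) < 1/4) w).const_mul
    (Real.sqrt (Real.sqrt (2 * Real.pi))⁻¹)
  apply h.congr
  filter_upwards with v
  rw [sqrt_max_eq]; ring

def m0 : ℝ := ∫ u : E2, Maxwellian u

def m1 : ℝ := ∫ u : E2, ‖u‖ * Maxwellian u

def I0 : ℝ := ∫ u : E2, Real.sqrt (Maxwellian u)

def I1 : ℝ := ∫ u : E2, ‖u‖ * Real.sqrt (Maxwellian u)

lemma m0_pos : 0 < m0 := by
  rw [m0, integral_pos_iff_support_of_nonneg (fun v => (maxwellian_pos v).le)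
    integrable_maxwellian]
  have : Function.support Maxwellian = Set.univ := by
    ext v; simp [Function.mem_support, (maxwellian_pos v).ne']
  rw [this]
  exact isOpen_univ.measure_pos volume ⟨0, trivial⟩

lemma m1_pos : 0 < m1 := by
  rw [m1, integral_pos_iff_support_of_nonneg
    (fun v => mul_nonneg (norm_nonneg v) (maxwellian_pos v).le)
    integrable_norm_mul_maxwellian]
  have : Function.support (fun v : E2 => ‖v‖ * Maxwellian v) = {(0 : E2)}ᶜ := by
    ext v
    simp [Function.mem_support, (maxwellian_pos v).ne', norm_eq_zero]
  rw [this]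
  apply (isOpen_compl_singleton).measure_pos volume
  refine ⟨EuclideanSpace.single 0 (1:ℝ), fun h => ?_⟩
  have := congrArg norm h
  simp [EuclideanSpace.norm_single] at this

lemma I0_nonneg : 0 ≤ I0 :=
  integral_nonneg (fun v => Real.sqrt_nonneg _)

lemma I1_nonneg : 0 ≤ I1 :=
  integral_nonneg (fun v => mul_nonneg (norm_nonneg v) (Real.sqrt_nonneg _))

def Jint (w : E2) : ℝ := ∫ u : E2, ‖w - u‖ * Maxwellian u

def Bint (w : E2) : ℝ := ∫ u : E2, ‖w - u‖ * Real.sqrt (Maxwellian u)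

lemma integrable_max_smul_id : Integrable (fun u : E2 => Maxwellian u • u) := by
  apply Integrable.mono' (g := fun u : E2 => ‖u‖ * Maxwellian u)
    integrable_norm_mul_maxwellian
    ((continuous_maxwellian.smul continuous_id).aestronglyMeasurable)
  filter_upwards with u
  show ‖Maxwellian u • u‖ ≤ ‖u‖ * Maxwellian u
  rw [norm_smul, Real.norm_eq_abs, abs_of_nonneg (maxwellian_pos u).le, mul_comm]

lemma zero_moment : (∫ u : E2, Maxwellian u • u) = 0 := by
  have h : (∫ u : E2, Maxwellian u • u) = ∫ u : E2, Maxwellian (-u) • (-u) := by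
    exact (MeasureTheory.integral_neg_eq_self (fun u : E2 => Maxwellian u • u) volume).symm
  have h2 : ∀ u : E2, Maxwellian (-u) • (-u) = -(Maxwellian u • u) := by
    intro u
    have : Maxwellian (-u) = Maxwellian u := by unfold Maxwellian; rw [norm_neg]
    rw [this, smul_neg]
  simp_rw [h2] at h
  rw [integral_neg] at h
  have h3 : (2:ℝ) • (∫ u : E2, Maxwellian u • u) = 0 := by
    rw [two_smul]
    rw [eq_neg_iff_add_eq_zero] at h
    exact h
  exact (smul_eq_zero.mp h3).resolve_left (by norm_num)

lemma J_ge_norm (w : E2) : m0 * ‖w‖ ≤ Jint w := by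
  have h1 : (∫ u : E2, Maxwellian u • (w - u)) = m0 • w := by
    have : (fun u : E2 => Maxwellian u • (w - u))
        = fun u : E2 => Maxwellian u • w - Maxwellian u • u := by
      funext u; rw [smul_sub]
    rw [this, integral_sub (integrable_maxwellian.smul_const w) integrable_max_smul_id,
      zero_moment, sub_zero, integral_smul_const]
    rfl
  have h2 : ‖(∫ u : E2, Maxwellian u • (w - u))‖ ≤ ∫ u : E2, ‖w - u‖ * Maxwellian u := by
    calc ‖(∫ u : E2, Maxwellian u • (w - u))‖ ≤ ∫ u : E2, ‖Maxwellian u • (w - u)‖ :=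
      norm_integral_le_integral_norm _
    _ = ∫ u : E2, ‖w - u‖ * Maxwellian u := by
        congr 1; funext u
        rw [norm_smul, Real.norm_eq_abs, abs_of_nonneg (maxwellian_pos u).le, mul_comm]
  rw [h1, norm_smul, Real.norm_eq_abs, abs_of_nonneg m0_pos.le] at h2
  exact h2

lemma J_ge_sub (w : E2) : m1 - m0 * ‖w‖ ≤ Jint w := by
  have h : (∫ u : E2, (‖u‖ * Maxwellian u - ‖w‖ * Maxwellian u)) ≤ Jint w := by
    apply integral_mono
      (integrable_norm_mul_maxwellian.sub (integrable_maxwellian.const_mul ‖w‖))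
      (integrable_shift_mul_maxwellian w)
    intro u
    simp only [Pi.sub_apply]
    have : ‖u‖ - ‖w‖ ≤ ‖w - u‖ := by
      have := norm_sub_norm_le u w
      rw [show ‖u - w‖ = ‖w - u‖ from norm_sub_rev u w] at this
      linarith
    nlinarith [maxwellian_pos u, norm_nonneg w, norm_nonneg u]
  rw [integral_sub integrable_norm_mul_maxwellian (integrable_maxwellian.const_mul ‖w‖),
    MeasureTheory.integral_const_mul] at h
  simpa [m0, m1, mul_comm] using h

lemma integrable_nu_integrand (w : E2) :
    Integrable (fun u : E2 => angInt (w - u) * Maxwellian u) := by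
  apply Integrable.mono' (g := fun u : E2 => 2 * Real.pi * (‖w - u‖ * Maxwellian u))
    ((integrable_shift_mul_maxwellian w).const_mul _)
    (((cont_angInt.comp (continuous_const.sub continuous_id)).mul
      continuous_maxwellian).aestronglyMeasurable)
  filter_upwards with u
  show ‖angInt (w - u) * Maxwellian u‖ ≤ 2 * Real.pi * (‖w - u‖ * Maxwellian u)
  rw [Real.norm_eq_abs, abs_of_nonneg (mul_nonneg (angInt_nonneg _) (maxwellian_pos u).le)]
  calc angInt (w - u) * Maxwellian u ≤ (2 * Real.pi * ‖w - u‖) * Maxwellian u :=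
    mul_le_mul_of_nonneg_right (angInt_le _) (maxwellian_pos u).le
  _ = 2 * Real.pi * (‖w - u‖ * Maxwellian u) := by ring

lemma nu_eq (w : E2) : collisionFreq w = ∫ u : E2, angInt (w - u) * Maxwellian u := rfl

lemma nu_ge_J (w : E2) : Real.pi * Jint w ≤ collisionFreq w := by
  rw [nu_eq]
  have : Real.pi * Jint w = ∫ u : E2, Real.pi * (‖w - u‖ * Maxwellian u) := by
    rw [MeasureTheory.integral_const_mul]; rfl
  rw [this]
  apply integral_mono ((integrable_shift_mul_maxwellian w).const_mul _)
    (integrable_nu_integrand w)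
  intro u
  calc Real.pi * (‖w - u‖ * Maxwellian u) = (Real.pi * ‖w - u‖) * Maxwellian u := by ring
  _ ≤ angInt (w - u) * Maxwellian u :=
    mul_le_mul_of_nonneg_right (angInt_ge _) (maxwellian_pos u).le

lemma nu_ge_const (w : E2) : Real.pi * m1 / 2 ≤ collisionFreq w := by
  have h1 := nu_ge_J w
  have h2 := J_ge_norm w
  have h3 := J_ge_sub w
  nlinarith [Real.pi_pos]

lemma nu_pos (w : E2) : 0 < collisionFreq w := by
  have := nu_ge_const w
  nlinarith [Real.pi_pos, m1_pos]

lemma B_le (w : E2) : Bint w ≤ ‖w‖ * I0 + I1 := by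
  have h : Bint w ≤ ∫ u : E2, (‖w‖ * Real.sqrt (Maxwellian u) + ‖u‖ * Real.sqrt (Maxwellian u)) := by
    apply integral_mono (integrable_shift_mul_sqrt_maxwellian w)
      ((integrable_sqrt_maxwellian.const_mul _).add integrable_norm_mul_sqrt_maxwellian)
    intro u
    simp only [Pi.add_apply]
    have h1 : ‖w - u‖ ≤ ‖w‖ + ‖u‖ := norm_sub_le _ _
    nlinarith [Real.sqrt_nonneg (Maxwellian u)]
  rw [integral_add (integrable_sqrt_maxwellian.const_mul _)
    integrable_norm_mul_sqrt_maxwellian, MeasureTheory.integral_const_mul] at h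
  exact h

def C2 : ℝ := I0 / (Real.pi * m0) + 2 * I1 / (Real.pi * m1)

lemma C2_nonneg : 0 ≤ C2 := by
  have hπ := Real.pi_pos
  apply add_nonneg
  · exact div_nonneg I0_nonneg (by nlinarith [m0_pos])
  · exact div_nonneg (by nlinarith [I1_nonneg]) (by nlinarith [m1_pos])

lemma B_le_C2_nu (w : E2) : Bint w ≤ C2 * collisionFreq w := by
  have hπ := Real.pi_pos
  have hν1 : Real.pi * (m0 * ‖w‖) ≤ collisionFreq w := by
    have := nu_ge_J w; have := J_ge_norm w; nlinarith
  have hν2 := nu_ge_const w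
  have h1 : ‖w‖ * I0 ≤ I0 / (Real.pi * m0) * collisionFreq w := by
    rw [div_mul_eq_mul_div, le_div_iff₀ (mul_pos hπ m0_pos)]
    calc ‖w‖ * I0 * (Real.pi * m0) = (Real.pi * (m0 * ‖w‖)) * I0 := by ring
    _ ≤ collisionFreq w * I0 := mul_le_mul_of_nonneg_right hν1 I0_nonneg
    _ = I0 * collisionFreq w := by ring
  have h2 : I1 ≤ 2 * I1 / (Real.pi * m1) * collisionFreq w := by
    rw [div_mul_eq_mul_div, le_div_iff₀ (mul_pos hπ m1_pos)]
    calc I1 * (Real.pi * m1) = (Real.pi * m1 / 2) * (2 * I1) := by ring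
    _ ≤ collisionFreq w * (2 * I1) := by
        apply mul_le_mul_of_nonneg_right hν2; nlinarith [I1_nonneg]
    _ = 2 * I1 * collisionFreq w := by ring
  calc Bint w ≤ ‖w‖ * I0 + I1 := B_le w
  _ ≤ I0 / (Real.pi * m0) * collisionFreq w + 2 * I1 / (Real.pi * m1) * collisionFreq w :=
      add_le_add h1 h2
  _ = C2 * collisionFreq w := by rw [C2]; ring

lemma star_energy (ω u w : E2) (hω : ‖ω‖ = 1) :
    ‖uStar ω u w‖ ^ 2 + ‖wStar ω u w‖ ^ 2 = ‖u‖ ^ 2 + ‖w‖ ^ 2 := by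
  set t : ℝ := (inner ℝ ω (w - u) : ℝ) with ht
  have hsm : ‖t • ω‖ ^ 2 = t ^ 2 := by
    rw [norm_smul, Real.norm_eq_abs, hω, mul_one, sq_abs]
  have h1 : ‖uStar ω u w‖ ^ 2 = ‖u‖ ^ 2 + 2 * (t * (inner ℝ u ω : ℝ)) + t ^ 2 := by
    rw [uStar, norm_add_sq_real, real_inner_smul_right, hsm]
  have h2 : ‖wStar ω u w‖ ^ 2 = ‖w‖ ^ 2 - 2 * (t * (inner ℝ w ω : ℝ)) + t ^ 2 := by
    rw [wStar, norm_sub_sq_real, real_inner_smul_right, hsm]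
  have h3 : t = (inner ℝ w ω : ℝ) - (inner ℝ u ω : ℝ) := by
    rw [ht, inner_sub_right, real_inner_comm ω w, real_inner_comm ω u]
  have h4 : t * t = t * ((inner ℝ w ω : ℝ) - (inner ℝ u ω : ℝ)) := by rw [← h3]
  rw [h1, h2]
  nlinarith [h4]

lemma sqrt_max_prod (ω u w : E2) (hω : ‖ω‖ = 1) :
    Real.sqrt (Maxwellian (uStar ω u w)) * Real.sqrt (Maxwellian (wStar ω u w))
      = Real.sqrt (Maxwellian u) * Real.sqrt (Maxwellian w) := by
  rw [← Real.sqrt_mul (maxwellian_pos _).le, ← Real.sqrt_mul (maxwellian_pos _).le]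
  congr 1
  unfold Maxwellian
  have key : ∀ a b : ℝ,
      ((Real.sqrt (2 * Real.pi))⁻¹ * Real.exp (-a / 2))
        * ((Real.sqrt (2 * Real.pi))⁻¹ * Real.exp (-b / 2))
      = ((Real.sqrt (2 * Real.pi))⁻¹) ^ 2 * Real.exp (-(a + b) / 2) := by
    intro a b
    rw [show -(a+b)/2 = -a/2 + -b/2 by ring, Real.exp_add]; ring
  rw [key, key]
  have h := star_energy ω u w hω
  rw [h]

lemma weight_pos {θ ρ : ℝ} (hθ : 0 < θ) (hρ : 0 ≤ ρ) (v : E2) :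
    0 < (1 + ‖v‖ ^ 2) ^ (θ / 2) * Real.exp (ρ * ‖v‖ ^ 2) := by
  apply mul_pos (Real.rpow_pos_of_pos (by positivity) _) (Real.exp_pos _)

lemma weight_ge_one {θ ρ : ℝ} (hθ : 0 < θ) (hρ : 0 ≤ ρ) (v : E2) :
    1 ≤ (1 + ‖v‖ ^ 2) ^ (θ / 2) * Real.exp (ρ * ‖v‖ ^ 2) := by
  have h1 : (1:ℝ) ≤ (1 + ‖v‖ ^ 2) ^ (θ / 2) :=
    Real.one_le_rpow (by nlinarith [sq_nonneg ‖v‖]) (by positivity)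
  have h2 : (1:ℝ) ≤ Real.exp (ρ * ‖v‖ ^ 2) :=
    Real.one_le_exp (by positivity)
  nlinarith

lemma gain_bound {θ ρ N : ℝ} (hθ : 0 < θ) (hρ : 0 ≤ ρ) (hN0 : 0 ≤ N)
    {f : E2 → ℝ}
    (hfb : ∀ v : E2, |f v| ≤ N * ((1 + ‖v‖ ^ 2) ^ (θ / 2) * Real.exp (ρ * ‖v‖ ^ 2))⁻¹)
    {a b u w : E2} (hE : ‖a‖ ^ 2 + ‖b‖ ^ 2 = ‖u‖ ^ 2 + ‖w‖ ^ 2) :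
    |f a| * |f b| ≤ N ^ 2 * ((1 + ‖w‖ ^ 2) ^ (θ / 2) * Real.exp (ρ * ‖w‖ ^ 2))⁻¹ := by
  set Pa := (1 + ‖a‖ ^ 2) ^ (θ / 2) * Real.exp (ρ * ‖a‖ ^ 2) with hPa
  set Pb := (1 + ‖b‖ ^ 2) ^ (θ / 2) * Real.exp (ρ * ‖b‖ ^ 2) with hPb
  set Pw := (1 + ‖w‖ ^ 2) ^ (θ / 2) * Real.exp (ρ * ‖w‖ ^ 2) with hPw
  have hPa0 : 0 < Pa := weight_pos hθ hρ a
  have hPb0 : 0 < Pb := weight_pos hθ hρ b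
  have hPw0 : 0 < Pw := weight_pos hθ hρ w
  have step1 : |f a| * |f b| ≤ (N * Pa⁻¹) * (N * Pb⁻¹) :=
    mul_le_mul (hfb a) (hfb b) (abs_nonneg _) (by positivity)
  have step2 : Pw ≤ Pa * Pb := by
    have hr : (1 + ‖w‖ ^ 2) ^ (θ / 2) ≤ ((1 + ‖a‖ ^ 2) * (1 + ‖b‖ ^ 2)) ^ (θ / 2) := by
      apply Real.rpow_le_rpow (by positivity) _ (by positivity)
      nlinarith [sq_nonneg ‖a‖, sq_nonneg ‖b‖, sq_nonneg ‖u‖, sq_nonneg (‖a‖ * ‖b‖)]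
    have he : Real.exp (ρ * ‖w‖ ^ 2) ≤ Real.exp (ρ * ‖a‖ ^ 2) * Real.exp (ρ * ‖b‖ ^ 2) := by
      rw [← Real.exp_add]
      apply Real.exp_le_exp.mpr
      nlinarith [sq_nonneg ‖u‖]
    calc Pw ≤ ((1 + ‖a‖ ^ 2) * (1 + ‖b‖ ^ 2)) ^ (θ / 2)
        * (Real.exp (ρ * ‖a‖ ^ 2) * Real.exp (ρ * ‖b‖ ^ 2)) := by
          apply mul_le_mul hr he (Real.exp_pos _).le (by positivity)
    _ = Pa * Pb := by
        rw [Real.mul_rpow (by positivity) (by positivity)]; ring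
  calc |f a| * |f b| ≤ (N * Pa⁻¹) * (N * Pb⁻¹) := step1
  _ = N ^ 2 * (Pa * Pb)⁻¹ := by rw [mul_inv]; ring
  _ ≤ N ^ 2 * Pw⁻¹ := by
      apply mul_le_mul_of_nonneg_left _ (by positivity)
      exact inv_anti₀ hPw0 step2

lemma main_pointwise {θ ρ N : ℝ} (hθ : 0 < θ) (hρ : 0 ≤ ρ) (hN0 : 0 ≤ N)
    {f : E2 → ℝ}
    (hfb : ∀ v : E2, |f v| ≤ N * ((1 + ‖v‖ ^ 2) ^ (θ / 2) * Real.exp (ρ * ‖v‖ ^ 2))⁻¹)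
    (w : E2) :
    (1 + ‖w‖ ^ 2) ^ (θ / 2) * Real.exp (ρ * ‖w‖ ^ 2)
        * |(collisionFreq w)⁻¹ * Gammaop f f w|
      ≤ 4 * Real.pi * C2 * N ^ 2 := by
  have hfN : ∀ v : E2, |f v| ≤ N := by
    intro v
    refine (hfb v).trans ?_
    have h1 := weight_ge_one (v := v) hθ hρ
    have h2 := weight_pos (v := v) hθ hρ
    calc N * ((1 + ‖v‖ ^ 2) ^ (θ / 2) * Real.exp (ρ * ‖v‖ ^ 2))⁻¹
        ≤ N * 1 := by
          apply mul_le_mul_of_nonneg_left _ hN0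
          rw [inv_le_one_iff₀]; right; exact h1
    _ = N := mul_one N
  set Pw := (1 + ‖w‖ ^ 2) ^ (θ / 2) * Real.exp (ρ * ‖w‖ ^ 2) with hPwdef
  have hPw : 0 < Pw := weight_pos hθ hρ w
  set K := N ^ 2 * Pw⁻¹ with hKdef
  have hK0 : 0 ≤ K := by positivity
  have tri : ∀ x y : ℝ, |x - y| ≤ |x| + |y| := fun x y => by
    rw [sub_eq_add_neg]
    exact (abs_add_le _ _).trans (by rw [abs_neg])
  have sM_nonneg : ∀ v : E2, 0 ≤ Real.sqrt (Maxwellian v) := fun v => Real.sqrt_nonneg _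
  -- Step A : pointwise bound on the φ-integrand
  have stepA : ∀ (u : E2) (φ : ℝ),
      |(|(inner ℝ (circleVec φ) (w - u) : ℝ)| *
        (Real.sqrt (Maxwellian (uStar (circleVec φ) u w)) * f (uStar (circleVec φ) u w) *
            Real.sqrt (Maxwellian (wStar (circleVec φ) u w)) * f (wStar (circleVec φ) u w)
          - Real.sqrt (Maxwellian u) * f u * Real.sqrt (Maxwellian w) * f w))|
      ≤ ‖w - u‖ * (Real.sqrt (Maxwellian u) * Real.sqrt (Maxwellian w)) * (2 * K) := by
    intro u φ
    have hE := star_energy (circleVec φ) u w (norm_circleVec φ)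
    have hprod := sqrt_max_prod (circleVec φ) u w (norm_circleVec φ)
    set a := uStar (circleVec φ) u w with ha
    set b := wStar (circleVec φ) u w with hb
    have hg : |f a| * |f b| ≤ K := gain_bound hθ hρ hN0 hfb hE
    have hl : |f u| * |f w| ≤ K := by
      calc |f u| * |f w| ≤ N * (N * Pw⁻¹) :=
        mul_le_mul (hfN u) (hfb w) (abs_nonneg _) hN0
      _ = K := by rw [hKdef]; ring
    have ht1 : |Real.sqrt (Maxwellian a) * f a * Real.sqrt (Maxwellian b) * f b|
        ≤ Real.sqrt (Maxwellian u) * Real.sqrt (Maxwellian w) * K := by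
      rw [abs_mul, abs_mul, abs_mul, abs_of_nonneg (sM_nonneg a), abs_of_nonneg (sM_nonneg b)]
      calc Real.sqrt (Maxwellian a) * |f a| * Real.sqrt (Maxwellian b) * |f b|
          = (Real.sqrt (Maxwellian a) * Real.sqrt (Maxwellian b)) * (|f a| * |f b|) := by ring
      _ = (Real.sqrt (Maxwellian u) * Real.sqrt (Maxwellian w)) * (|f a| * |f b|) := by
          rw [hprod]
      _ ≤ Real.sqrt (Maxwellian u) * Real.sqrt (Maxwellian w) * K := by
          apply mul_le_mul_of_nonneg_left hg (by positivity)
    have ht2 : |Real.sqrt (Maxwellian u) * f u * Real.sqrt (Maxwellian w) * f w|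
        ≤ Real.sqrt (Maxwellian u) * Real.sqrt (Maxwellian w) * K := by
      rw [abs_mul, abs_mul, abs_mul, abs_of_nonneg (sM_nonneg u), abs_of_nonneg (sM_nonneg w)]
      calc Real.sqrt (Maxwellian u) * |f u| * Real.sqrt (Maxwellian w) * |f w|
          = (Real.sqrt (Maxwellian u) * Real.sqrt (Maxwellian w)) * (|f u| * |f w|) := by ring
      _ ≤ Real.sqrt (Maxwellian u) * Real.sqrt (Maxwellian w) * K := by
          apply mul_le_mul_of_nonneg_left hl (by positivity)
    calc |(|(inner ℝ (circleVec φ) (w - u) : ℝ)| *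
        (Real.sqrt (Maxwellian a) * f a * Real.sqrt (Maxwellian b) * f b
          - Real.sqrt (Maxwellian u) * f u * Real.sqrt (Maxwellian w) * f w))|
        = |(inner ℝ (circleVec φ) (w - u) : ℝ)| *
          |Real.sqrt (Maxwellian a) * f a * Real.sqrt (Maxwellian b) * f b
            - Real.sqrt (Maxwellian u) * f u * Real.sqrt (Maxwellian w) * f w| := by
          rw [abs_mul, abs_abs]
    _ ≤ ‖w - u‖ * (Real.sqrt (Maxwellian u) * Real.sqrt (Maxwellian w) * K
          + Real.sqrt (Maxwellian u) * Real.sqrt (Maxwellian w) * K) := by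
        apply mul_le_mul (abs_inner_circleVec_le φ _)
          (((tri _ _).trans (add_le_add ht1 ht2))) (abs_nonneg _) (norm_nonneg _)
    _ = ‖w - u‖ * (Real.sqrt (Maxwellian u) * Real.sqrt (Maxwellian w)) * (2 * K) := by ring
  -- Step B : bound on the φ-integral
  have stepB : ∀ u : E2,
      |∫ φ in (0:ℝ)..(2 * Real.pi),
        |(inner ℝ (circleVec φ) (w - u) : ℝ)| *
          (Real.sqrt (Maxwellian (uStar (circleVec φ) u w)) * f (uStar (circleVec φ) u w) *
              Real.sqrt (Maxwellian (wStar (circleVec φ) u w)) * f (wStar (circleVec φ) u w)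
            - Real.sqrt (Maxwellian u) * f u * Real.sqrt (Maxwellian w) * f w)|
      ≤ (2 * Real.pi * (Real.sqrt (Maxwellian w) * (2 * K)))
          * (‖w - u‖ * Real.sqrt (Maxwellian u)) := by
    intro u
    have h := intervalIntegral.norm_integral_le_of_norm_le_const
      (C := ‖w - u‖ * (Real.sqrt (Maxwellian u) * Real.sqrt (Maxwellian w)) * (2 * K))
      (a := (0:ℝ)) (b := 2 * Real.pi)
      (f := fun φ => |(inner ℝ (circleVec φ) (w - u) : ℝ)| *
          (Real.sqrt (Maxwellian (uStar (circleVec φ) u w)) * f (uStar (circleVec φ) u w) *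
              Real.sqrt (Maxwellian (wStar (circleVec φ) u w)) * f (wStar (circleVec φ) u w)
            - Real.sqrt (Maxwellian u) * f u * Real.sqrt (Maxwellian w) * f w))
      (fun φ _ => stepA u φ)
    rw [Real.norm_eq_abs] at h
    calc |∫ φ in (0:ℝ)..(2 * Real.pi), _| ≤ _ := h
    _ = (2 * Real.pi * (Real.sqrt (Maxwellian w) * (2 * K)))
          * (‖w - u‖ * Real.sqrt (Maxwellian u)) := by
        rw [sub_zero, abs_of_nonneg (by positivity : (0:ℝ) ≤ 2 * Real.pi)]
        ring
  -- Step C : bound on the u-integral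
  have stepC : |∫ u : E2, ∫ φ in (0:ℝ)..(2 * Real.pi),
        |(inner ℝ (circleVec φ) (w - u) : ℝ)| *
          (Real.sqrt (Maxwellian (uStar (circleVec φ) u w)) * f (uStar (circleVec φ) u w) *
              Real.sqrt (Maxwellian (wStar (circleVec φ) u w)) * f (wStar (circleVec φ) u w)
            - Real.sqrt (Maxwellian u) * f u * Real.sqrt (Maxwellian w) * f w)|
      ≤ (2 * Real.pi * (Real.sqrt (Maxwellian w) * (2 * K))) * Bint w := by
    have hgint : Integrable (fun u : E2 =>
        (2 * Real.pi * (Real.sqrt (Maxwellian w) * (2 * K)))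
          * (‖w - u‖ * Real.sqrt (Maxwellian u))) :=
      (integrable_shift_mul_sqrt_maxwellian w).const_mul _
    have h := MeasureTheory.norm_integral_le_of_norm_le hgint
      (Filter.Eventually.of_forall (fun u => by
        rw [Real.norm_eq_abs]; exact stepB u))
    rw [Real.norm_eq_abs] at h
    calc |∫ u : E2, _| ≤ _ := h
    _ = (2 * Real.pi * (Real.sqrt (Maxwellian w) * (2 * K))) * Bint w := by
        rw [MeasureTheory.integral_const_mul]; rfl
  -- Step D : bound on Gammaop
  have hsqw : 0 < Real.sqrt (Maxwellian w) := Real.sqrt_pos.mpr (maxwellian_pos w)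
  have stepD : |Gammaop f f w| ≤ 4 * Real.pi * K * Bint w := by
    rw [Gammaop, abs_mul, abs_of_nonneg (inv_nonneg.mpr hsqw.le)]
    calc (Real.sqrt (Maxwellian w))⁻¹ * |∫ u : E2, ∫ φ in (0:ℝ)..(2 * Real.pi), _|
        ≤ (Real.sqrt (Maxwellian w))⁻¹
            * ((2 * Real.pi * (Real.sqrt (Maxwellian w) * (2 * K))) * Bint w) := by
          apply mul_le_mul_of_nonneg_left stepC (inv_nonneg.mpr hsqw.le)
    _ = 4 * Real.pi * K * Bint w := by
        field_simp
        ring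
  -- Step E : conclusion
  have hν := nu_pos w
  have hB := B_le_C2_nu w
  have hBnn : 0 ≤ Bint w :=
    integral_nonneg (fun u => mul_nonneg (norm_nonneg _) (Real.sqrt_nonneg _))
  have habs : |(collisionFreq w)⁻¹ * Gammaop f f w|
      = (collisionFreq w)⁻¹ * |Gammaop f f w| := by
    rw [abs_mul, abs_of_nonneg (inv_nonneg.mpr hν.le)]
  rw [habs]
  have hPwK : Pw * K = N ^ 2 := by
    rw [hKdef]
    field_simp
  have hfrac : (collisionFreq w)⁻¹ * Bint w ≤ C2 := by
    rw [← div_eq_inv_mul, div_le_iff₀ hν]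
    linarith
  calc Pw * ((collisionFreq w)⁻¹ * |Gammaop f f w|)
      ≤ Pw * ((collisionFreq w)⁻¹ * (4 * Real.pi * K * Bint w)) := by
        apply mul_le_mul_of_nonneg_left _ hPw.le
        apply mul_le_mul_of_nonneg_left stepD (inv_nonneg.mpr hν.le)
  _ = (4 * Real.pi) * (Pw * K) * ((collisionFreq w)⁻¹ * Bint w) := by ring
  _ ≤ (4 * Real.pi) * (Pw * K) * C2 := by
      apply mul_le_mul_of_nonneg_left hfrac
      positivity
  _ = 4 * Real.pi * C2 * N ^ 2 := by rw [hPwK]; ring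

end BoltzmannAux

/-- Weighted `L^∞` estimate for the nonlinear Boltzmann
collision term: for every `θ > 0` and `0 ≤ ρ ≤ 1/4` there is `C > 0` such
that `‖ν^{−1} Γ[f, f]‖_{θ,ρ} ≤ C ‖f‖_{θ,ρ}²` whenever `‖f‖_{θ,ρ} < ∞`. -/
theorem nonlinear_collision_weighted_estimate :
    ∀ θ : ℝ, 0 < θ → ∀ ρ : ℝ, 0 ≤ ρ → ρ ≤ 1 / 4 →
      ∃ C : ℝ, 0 < C ∧
        ∀ f : EuclideanSpace ℝ (Fin 2) → ℝ,
          weightedSupNorm θ ρ f < ⊤ →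
          weightedSupNorm θ ρ (fun v => (collisionFreq v)⁻¹ * Gammaop f f v)
            ≤ ENNReal.ofReal C * (weightedSupNorm θ ρ f) ^ 2 := by
  intro θ hθ ρ hρ _hρ4
  have hCpos : 0 < 4 * Real.pi * C2 + 1 := by nlinarith [Real.pi_pos, C2_nonneg]
  refine ⟨4 * Real.pi * C2 + 1, hCpos, ?_⟩
  intro f hf
  set S := weightedSupNorm θ ρ f with hSdef
  set N := S.toReal with hNdef
  have hN0 : 0 ≤ N := ENNReal.toReal_nonneg
  have hSne : S ≠ ⊤ := hf.ne
  have hN : ∀ v : (EuclideanSpace ℝ (Fin 2)), (1 + ‖v‖ ^ 2) ^ (θ / 2) * Real.exp (ρ * ‖v‖ ^ 2) * |f v| ≤ N := by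
    intro v
    have h1 : ENNReal.ofReal ((1 + ‖v‖ ^ 2) ^ (θ / 2) * Real.exp (ρ * ‖v‖ ^ 2) * |f v|)
        ≤ S := by
      rw [hSdef, weightedSupNorm]
      exact le_iSup (fun v : (EuclideanSpace ℝ (Fin 2)) =>
        ENNReal.ofReal ((1 + ‖v‖ ^ 2) ^ (θ / 2) * Real.exp (ρ * ‖v‖ ^ 2) * |f v|)) v
    exact (ENNReal.ofReal_le_iff_le_toReal hSne).mp h1
  have hfb : ∀ v : (EuclideanSpace ℝ (Fin 2)),
      |f v| ≤ N * ((1 + ‖v‖ ^ 2) ^ (θ / 2) * Real.exp (ρ * ‖v‖ ^ 2))⁻¹ := by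
    intro v
    have hw := weight_pos (v := v) hθ hρ
    rw [mul_comm, ← div_eq_inv_mul, le_div_iff₀ hw]
    nlinarith [hN v]
  have hpt := fun w : (EuclideanSpace ℝ (Fin 2)) => main_pointwise hθ hρ hN0 hfb w
  rw [weightedSupNorm]
  apply iSup_le
  intro v
  have h2 : (1 + ‖v‖ ^ 2) ^ (θ / 2) * Real.exp (ρ * ‖v‖ ^ 2)
      * |(collisionFreq v)⁻¹ * Gammaop f f v| ≤ (4 * Real.pi * C2 + 1) * N ^ 2 := by
    nlinarith [hpt v, sq_nonneg N]
  calc ENNReal.ofReal ((1 + ‖v‖ ^ 2) ^ (θ / 2) * Real.exp (ρ * ‖v‖ ^ 2)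
        * |(collisionFreq v)⁻¹ * Gammaop f f v|)
      ≤ ENNReal.ofReal ((4 * Real.pi * C2 + 1) * N ^ 2) := ENNReal.ofReal_le_ofReal h2
  _ = ENNReal.ofReal (4 * Real.pi * C2 + 1) * ENNReal.ofReal (N ^ 2) :=
      ENNReal.ofReal_mul hCpos.le
  _ = ENNReal.ofReal (4 * Real.pi * C2 + 1) * S ^ 2 := by
      rw [ENNReal.ofReal_pow hN0, hNdef, ENNReal.ofReal_toReal hSne]
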